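/- Let φ : ℝ² → ℝ be a nonnegative, convex, twice continuously differentiable function, let ψ = |·|² + φ, and let σ be the projection measure on the graph of ψ. Then the convolution measure σ ∗ σ is absolutely continuous with respect to Lebesgue measure on ℝ³, and its topological support equals the set {(ξ, τ) ∈ ℝ² × ℝ : τ ≥ 2ψ(ξ/2)}. -/

import Mathlib

open MeasureTheory Filter
open scoped ENNReal

noncomputable section

abbrev R2 : Type := EuclideanSpace ℝ (Fin 2)
abbrev R3 : Type := R2 × ℝ

/-- Projection measure on the graph of `Ψ`. -/
def proj (Ψ : R2 → ℝ) : Measure R3 :=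
  Measure.map (fun y => (y, Ψ y)) volume

/-- Convolution of Borel measures on `ℝ³`. -/
def mconv (μ ν : Measure R3) : Measure R3 :=
  Measure.map (fun p : R3 × R3 => p.1 + p.2) (μ.prod ν)

/-- Topological support of a measure on `ℝ³`. -/
def msupport (μ : Measure R3) : Set R3 :=
  {x | ∀ U : Set R3, IsOpen U → x ∈ U → μ U ≠ 0}

open Set
open scoped RealInnerProductSpace


/-- 1D key lemma: a function whose derivative is "1-strongly increasing" pulls back
null sets to null sets. -/
lemma oneD_aux {f f' : ℝ → ℝ} (hd : ∀ t, HasDerivAt f (f' t) t)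
    (hmono : ∀ u t : ℝ, u ≤ t → f' u + (t - u) ≤ f' t)
    {N : Set ℝ} (hN : volume N = 0) : volume (f ⁻¹' N) = 0 := by
  obtain ⟨N', hNN', hN'm, hN'0⟩ := exists_measurable_superset_of_null hN
  refine measure_mono_null (Set.preimage_mono hNN') ?_
  have hf'eq : f' = deriv f := funext fun t => ((hd t).deriv).symm
  have hfc : Continuous f := by
    rw [continuous_iff_continuousAt]; exact fun t => (hd t).continuousAt
  have hfm : Measurable f := hfc.measurable
  have hf'm : Measurable f' := by rw [hf'eq]; exact measurable_deriv f
  -- the set where f' ≤ 0 is nonempty and bounded above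
  set A : Set ℝ := {t | f' t ≤ 0} with hA
  have hAne : A.Nonempty := by
    refine ⟨-(|f' 0| + 1), ?_⟩
    have h := hmono (-(|f' 0| + 1)) 0 (by nlinarith [abs_nonneg (f' 0)])
    have : f' 0 - |f' 0| ≤ 0 := sub_nonpos.mpr (le_abs_self _)
    simp only [hA, Set.mem_setOf_eq]
    nlinarith [neg_abs_le (f' 0)]
  have hAbdd : BddAbove A := by
    refine ⟨|f' 0|, fun t ht => ?_⟩
    by_contra hlt
    push_neg at hlt
    have h0t : (0:ℝ) ≤ t := le_trans (abs_nonneg _) hlt.le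
    have := hmono 0 t h0t
    have : 0 < f' t := by nlinarith [neg_abs_le (f' 0)]
    exact absurd ht (by simp [hA]; linarith)
  set t₀ : ℝ := sSup A with ht₀
  have hpos : ∀ t, t₀ < t → 0 < f' t := by
    intro t ht
    by_contra h
    push_neg at h
    exact absurd (le_csSup hAbdd h) (not_le.mpr ht)
  have hneg : ∀ t, t < t₀ → f' t < 0 := by
    intro t ht
    obtain ⟨u, huA, htu⟩ := exists_lt_of_lt_csSup hAne ht
    have := hmono t u htu.le
    have huA' : f' u ≤ 0 := huA
    linarith
  -- key sub-lemma
  have key : ∀ s : Set ℝ, MeasurableSet s → (∀ x ∈ s, f' x ≠ 0) → Set.InjOn f s →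
      volume (f ⁻¹' N' ∩ s) = 0 := by
    intro s hs hne hinj
    have hfd : ∀ x ∈ s, HasFDerivWithinAt f
        (ContinuousLinearMap.smulRight (1 : ℝ →L[ℝ] ℝ) (f' x)) s x :=
      fun x _ => ((hasDerivAt_iff_hasFDerivAt.mp (hd x))).hasFDerivWithinAt
    have hmap := map_withDensity_abs_det_fderiv_eq_addHaar volume hs.nullMeasurableSet hfd hinj
    have hdens : (fun x => ENNReal.ofReal |(ContinuousLinearMap.smulRight (1 : ℝ →L[ℝ] ℝ) (f' x)).det|)
        = fun x => ENNReal.ofReal |f' x| := by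
      funext x; rw [ContinuousLinearMap.det_smulRight, ContinuousLinearMap.one_apply, one_mul]
    rw [hdens] at hmap
    set W : Measure ℝ := (volume.restrict s).withDensity fun x => ENNReal.ofReal |f' x|
      with hW
    have h1 : W (f ⁻¹' N') = 0 := by
      have : W (f ⁻¹' N') = (volume.restrict (f '' s)) N' := by
        rw [hW, ← Measure.map_apply hfm hN'm, hmap]
      rw [this]
      exact le_antisymm (le_trans (Measure.restrict_apply_le _ _) hN'0.le) zero_le
    rw [hW, withDensity_apply _ (hfm hN'm), Measure.restrict_restrict (hfm hN'm)] at h1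
    have h3 : ∀ᵐ x ∂(volume.restrict (f ⁻¹' N' ∩ s)), ENNReal.ofReal |f' x| = 0 :=
      (lintegral_eq_zero_iff (hf'm.abs.ennreal_ofReal)).mp h1
    have h4 : ∀ᵐ x ∂(volume.restrict (f ⁻¹' N' ∩ s)), False := by
      filter_upwards [h3, ae_restrict_mem ((hfm hN'm).inter hs)] with x hx hxs
      have : f' x ≠ 0 := hne x hxs.2
      have : 0 < |f' x| := abs_pos.mpr this
      rw [ENNReal.ofReal_eq_zero] at hx
      linarith
    have hz : volume.restrict (f ⁻¹' N' ∩ s) = 0 :=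
      ae_eq_bot.mp (by rwa [Filter.eventually_false_iff_eq_bot] at h4)
    exact Measure.restrict_eq_zero.mp hz
  -- strict monotonicity on the two sides
  have hsm : StrictMonoOn f (Ioi t₀) := by
    intro u hu t ht hut
    obtain ⟨c, hc, hceq⟩ := exists_hasDerivAt_eq_slope f f' hut
      (hfc.continuousOn) (fun x _ => hd x)
    have hc0 : 0 < f' c := hpos c (lt_trans hu hc.1)
    have hd0 : 0 < t - u := sub_pos.mpr hut
    rw [eq_div_iff hd0.ne'] at hceq
    nlinarith
  have hsa : StrictAntiOn f (Iio t₀) := by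
    intro u hu t ht hut
    obtain ⟨c, hc, hceq⟩ := exists_hasDerivAt_eq_slope f f' hut
      (hfc.continuousOn) (fun x _ => hd x)
    have hc0 : f' c < 0 := hneg c (lt_trans hc.2 ht)
    have hd0 : 0 < t - u := sub_pos.mpr hut
    rw [eq_div_iff hd0.ne'] at hceq
    nlinarith
  have hIoi := key (Ioi t₀) measurableSet_Ioi (fun x hx => (hpos x hx).ne') hsm.injOn
  have hIio := key (Iio t₀) measurableSet_Iio (fun x hx => (hneg x hx).ne) hsa.injOn
  have hcover : f ⁻¹' N' ⊆ (f ⁻¹' N' ∩ Iio t₀) ∪ ((f ⁻¹' N' ∩ Ioi t₀) ∪ {t₀}) := by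
    intro x hx
    rcases lt_trichotomy x t₀ with h | h | h
    · exact Or.inl ⟨hx, h⟩
    · exact Or.inr (Or.inr (by simp [h]))
    · exact Or.inr (Or.inl ⟨hx, h⟩)
  refine measure_mono_null hcover ?_
  refine measure_union_null hIio (measure_union_null hIoi ?_)
  simp

lemma convexOn_comp_affine {E F : Type*} [NormedAddCommGroup E] [NormedSpace ℝ E]
    [NormedAddCommGroup F] [NormedSpace ℝ F] {g : F → ℝ}
    (hg : ConvexOn ℝ Set.univ g) (L : E →ₗ[ℝ] F) (v : F) :
    ConvexOn ℝ Set.univ (fun x => g (v + L x)) := by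
  refine ⟨convex_univ, fun x _ y _ a b ha hb hab => ?_⟩
  have h := hg.2 (Set.mem_univ (v + L x)) (Set.mem_univ (v + L y)) ha hb hab
  have hv : v + L (a • x + b • y) = a • (v + L x) + b • (v + L y) := by
    have : a • v + b • v = v := by rw [← add_smul, hab, one_smul]
    calc v + L (a • x + b • y) = (a • v + b • v) + (a • L x + b • L y) := by
          rw [this, map_add, LinearMap.map_smul, LinearMap.map_smul]
      _ = a • (v + L x) + b • (v + L y) := by rw [smul_add, smul_add]; abel
  show g (v + L (a • x + b • y)) ≤ _
  rw [hv]; exact h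

lemma twoD'_aux {w : ℝ × ℝ → ℝ} (hw : ConvexOn ℝ Set.univ w) (hwd : Differentiable ℝ w)
    {N : Set ℝ} (hNm : MeasurableSet N) (hN : volume N = 0) :
    volume {p : ℝ × ℝ | 2*(p.1^2+p.2^2) + w p ∈ N} = 0 := by
  have hwc : Continuous w := hwd.continuous
  have hk : Continuous fun p : ℝ × ℝ => 2*(p.1^2+p.2^2) + w p := by fun_prop
  have hA : MeasurableSet {p : ℝ × ℝ | 2*(p.1^2+p.2^2) + w p ∈ N} := hk.measurable hNm
  rw [Measure.volume_eq_prod, Measure.prod_apply hA]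
  have hslice : ∀ a : ℝ,
      volume (Prod.mk a ⁻¹' {p : ℝ × ℝ | 2*(p.1^2+p.2^2) + w p ∈ N}) = 0 := by
    intro a
    set wa : ℝ → ℝ := fun b => w (a, b) with hwa
    have hwad : Differentiable ℝ wa :=
      hwd.comp ((differentiable_const a).prodMk differentiable_id)
    have hwac : ConvexOn ℝ Set.univ wa := by
      have h := convexOn_comp_affine hw (LinearMap.inr ℝ ℝ ℝ) (a, 0)
      have he : (fun b : ℝ => w ((a, 0) + (LinearMap.inr ℝ ℝ ℝ) b)) = wa := by
        funext b; simp [hwa]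
      rwa [he] at h
    have hmono' : Monotone (deriv wa) :=
      monotoneOn_univ.mp (hwac.monotoneOn_deriv fun x _ => hwad x)
    have hdf : ∀ b : ℝ, HasDerivAt (fun t => 2*(a^2+t^2) + wa t) (4*b + deriv wa b) b := by
      intro b
      have h1 : HasDerivAt (fun t : ℝ => t^2) (2*b) b := by simpa using hasDerivAt_pow 2 b
      have h2 := (h1.const_mul (2:ℝ)).const_add (2*a^2)
      have hfun : (fun t : ℝ => 2*a^2 + 2*t^2) = fun t : ℝ => 2*(a^2+t^2) := by
        funext t; ring
      rw [hfun] at h2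
      have h3 : HasDerivAt (fun t => 2*(a^2+t^2) + wa t) (2*(2*b) + deriv wa b) b :=
        h2.add (hwad b).hasDerivAt
      convert h3 using 1; ring
    have h0 := oneD_aux hdf
      (fun u t hut => by have := hmono' hut; show 4*u + deriv wa u + (t - u) ≤ 4*t + deriv wa t; linarith) hN
    exact h0
  simp only [hslice]
  simp

lemma twoD_aux (φ : R2 → ℝ) (hφconv : ConvexOn ℝ Set.univ φ) (hφC2 : ContDiff ℝ 2 φ)
    (s : R2) {N : Set ℝ} (hNm : MeasurableSet N) (hN : volume N = 0) :
    volume {z : R2 | (‖s - z‖^2 + φ (s - z)) + (‖z‖^2 + φ z) ∈ N} = 0 := by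
  have hφd : Differentiable ℝ φ := hφC2.differentiable two_ne_zero
  have hφc : Continuous φ := hφC2.continuous
  set W : R2 → ℝ := fun z => ‖s‖^2 - 2*⟪s, z⟫ + (φ (s - z) + φ z) with hW
  have halg : ∀ z : R2, (‖s - z‖^2 + φ (s - z)) + (‖z‖^2 + φ z) = 2*‖z‖^2 + W z := by
    intro z
    rw [hW]
    simp only [norm_sub_sq_real]
    ring
  have hWconv : ConvexOn ℝ Set.univ W := by
    have c1 : ConvexOn ℝ Set.univ (fun z : R2 => ‖s‖^2 - 2*⟪s, z⟫) := by
      refine ⟨convex_univ, fun x _ y _ a b ha hb hab => le_of_eq ?_⟩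
      simp only [smul_eq_mul, inner_add_right, real_inner_smul_right]
      linear_combination (-(‖s‖^2) : ℝ) * hab
    have c2 : ConvexOn ℝ Set.univ (fun z : R2 => φ (s - z)) := by
      have h := convexOn_comp_affine hφconv (-(LinearMap.id : R2 →ₗ[ℝ] R2)) s
      have he : (fun z : R2 => φ (s + (-(LinearMap.id : R2 →ₗ[ℝ] R2)) z))
          = fun z : R2 => φ (s - z) := by
        funext z; simp [sub_eq_add_neg]
      rwa [he] at h
    have c3 : ConvexOn ℝ Set.univ (fun z : R2 => φ z) := hφconv
    exact c1.add (c2.add c3)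
  have hWdiff : Differentiable ℝ W := by
    refine (differentiable_const _).sub ?_ |>.add
      ((hφd.comp ((differentiable_const s).sub differentiable_id)).add hφd)
    exact (differentiable_const (2:ℝ)).mul
      (Differentiable.inner ℝ (differentiable_const s) differentiable_id)
  -- the linear map from ℝ × ℝ to R2
  set u₀ : R2 := EuclideanSpace.single (0 : Fin 2) (1:ℝ) with hu₀
  set u₁ : R2 := EuclideanSpace.single (1 : Fin 2) (1:ℝ) with hu₁
  set Lmap : (ℝ × ℝ) →ₗ[ℝ] R2 :=
    { toFun := fun p => p.1 • u₀ + p.2 • u₁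
      map_add' := by intro p q; simp [add_smul]; abel
      map_smul' := by intro c p; simp [smul_smul, smul_add] } with hLmap
  have hLdiff : Differentiable ℝ (⇑Lmap) :=
    (differentiable_fst.smul_const u₀).add (differentiable_snd.smul_const u₁)
  have hLcoord : ∀ p : ℝ × ℝ, Lmap p 0 = p.1 ∧ Lmap p 1 = p.2 := by
    intro p
    constructor <;>
      simp [hLmap, hu₀, hu₁, EuclideanSpace.single_apply, PiLp.add_apply, PiLp.smul_apply]
  have hLnorm : ∀ p : ℝ × ℝ, ‖Lmap p‖^2 = p.1^2 + p.2^2 := by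
    intro p
    rw [EuclideanSpace.norm_eq, Real.sq_sqrt (by positivity)]
    rw [Fin.sum_univ_two, (hLcoord p).1, (hLcoord p).2]
    simp [Real.norm_eq_abs, sq_abs]
  -- measure preserving transfer
  have emp : MeasurePreserving
      ((WithLp.toLp 2) ∘
        (⇑(MeasurableEquiv.finTwoArrow (α := ℝ)).symm)) volume volume :=
    (PiLp.volume_preserving_toLp (Fin 2)).comp
      ((volume_preserving_finTwoArrow ℝ).symm)
  have he : ∀ p : ℝ × ℝ,
      WithLp.toLp 2 ((MeasurableEquiv.finTwoArrow).symm p)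
        = Lmap p := by
    intro p
    refine PiLp.ext fun i => ?_
    have hcoe : WithLp.toLp 2
        ((MeasurableEquiv.finTwoArrow).symm p) i = (MeasurableEquiv.finTwoArrow).symm p i := rfl
    rw [hcoe]
    fin_cases i <;>
      simp [MeasurableEquiv.finTwoArrow_symm_apply, hLmap, hu₀, hu₁,
        EuclideanSpace.single_apply, PiLp.add_apply, PiLp.smul_apply]
  -- the target set
  have hAm : MeasurableSet {z : R2 | (‖s - z‖^2 + φ (s - z)) + (‖z‖^2 + φ z) ∈ N} := by
    have : Continuous fun z : R2 => (‖s - z‖^2 + φ (s - z)) + (‖z‖^2 + φ z) := by fun_prop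
    exact this.measurable hNm
  rw [← emp.measure_preimage hAm.nullMeasurableSet]
  have hseteq : ((WithLp.toLp 2) ∘
        (⇑(MeasurableEquiv.finTwoArrow (α := ℝ)).symm)) ⁻¹'
        {z : R2 | (‖s - z‖^2 + φ (s - z)) + (‖z‖^2 + φ z) ∈ N}
      = {p : ℝ × ℝ | 2*(p.1^2+p.2^2) + W (Lmap p) ∈ N} := by
    ext p
    simp only [Set.mem_preimage, Set.mem_setOf_eq, Function.comp_apply, he p]
    rw [halg (Lmap p), hLnorm p]
  rw [hseteq]
  exact twoD'_aux
    (by have := convexOn_comp_affine hWconv Lmap 0; simp only [zero_add] at this; exact this)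
    (hWdiff.comp hLdiff) hNm hN

set_option maxHeartbeats 1000000 in
theorem statement10 (φ : R2 → ℝ) (hφ0 : ∀ y, 0 ≤ φ y)
    (hφconv : ConvexOn ℝ Set.univ φ) (hφC2 : ContDiff ℝ 2 φ)
    (ψ : R2 → ℝ) (hψ : ψ = fun y => ‖y‖ ^ 2 + φ y) :
    mconv (proj ψ) (proj ψ) ≪ volume ∧
    msupport (mconv (proj ψ) (proj ψ)) =
      {q : R3 | 2 * ψ ((2:ℝ)⁻¹ • q.1) ≤ q.2} := by
  have hφc : Continuous φ := hφC2.continuous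
  have hψc : Continuous ψ := by rw [hψ]; fun_prop
  have hψ0 : ∀ y, 0 ≤ ψ y := by
    intro y; rw [hψ]; exact add_nonneg (by positivity) (hφ0 y)
  have hψlb : ∀ y, ‖y‖^2 ≤ ψ y := by
    intro y; rw [hψ]; simpa using hφ0 y
  set g : R2 → R3 := fun y => (y, ψ y) with hg
  have hgm : Measurable g := measurable_id.prodMk hψc.measurable
  set F : R2 × R2 → R3 := fun p => (p.1 + p.2, ψ p.1 + ψ p.2) with hF
  have hFc : Continuous F := by
    apply Continuous.prodMk
    · exact continuous_fst.add continuous_snd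
    · exact (hψc.comp continuous_fst).add (hψc.comp continuous_snd)
  have hFm : Measurable F := hFc.measurable
  have hμ : mconv (proj ψ) (proj ψ) = Measure.map F volume := by
    unfold mconv proj
    rw [Measure.map_prod_map _ _ hgm hgm,
      Measure.map_map measurable_add (hgm.prodMap hgm)]
    rw [← Measure.volume_eq_prod]
    congr 1
  constructor
  · -- absolute continuity
    rw [hμ]
    refine Measure.AbsolutelyContinuous.mk fun S hSm hS0 => ?_
    rw [Measure.map_apply hFm hSm]
    set Tl : (R2 × R2) →ₗ[ℝ] (R2 × R2) :=
      (LinearMap.fst ℝ R2 R2 - LinearMap.snd ℝ R2 R2).prod (LinearMap.snd ℝ R2 R2) with hTl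
    set H : R2 × R2 → R3 := fun q => (q.1, ψ (q.1 - q.2) + ψ q.2) with hH
    have hHc : Continuous H := by
      apply Continuous.prodMk continuous_fst
      exact (hψc.comp (continuous_fst.sub continuous_snd)).add (hψc.comp continuous_snd)
    have hHS : MeasurableSet (H ⁻¹' S) := hHc.measurable hSm
    have himg : F ⁻¹' S = Tl '' (H ⁻¹' S) := by
      ext p
      constructor
      · intro hp
        refine ⟨(p.1 + p.2, p.2), ?_, ?_⟩
        · show H (p.1 + p.2, p.2) ∈ S
          have : H (p.1 + p.2, p.2) = F p := by
            simp only [hH, hF, add_sub_cancel_right]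
          rwa [this]
        · show Tl (p.1 + p.2, p.2) = p
          simp only [hTl, LinearMap.prod_apply, LinearMap.sub_apply, LinearMap.fst_apply,
            LinearMap.snd_apply, Function.prod, add_sub_cancel_right]
      · rintro ⟨q, hq, rfl⟩
        show F (Tl q) ∈ S
        have : F (Tl q) = H q := by
          simp only [hTl, hF, hH, LinearMap.prod_apply, LinearMap.sub_apply, LinearMap.fst_apply,
            LinearMap.snd_apply, Function.prod, sub_add_cancel]
        rwa [this]
    haveI : ((volume : Measure R2).prod (volume : Measure R2)).IsAddHaarMeasure :=
      Measure.prod.instIsAddHaarMeasure _ _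
    rw [himg, Measure.volume_eq_prod, Measure.addHaar_image_linearMap]
    suffices h : ((volume : Measure R2).prod (volume : Measure R2)) (H ⁻¹' S) = 0 by
      rw [h, mul_zero]
    rw [Measure.prod_apply hHS]
    have hs0 : ∀ᵐ x ∂(volume : Measure R2), volume (Prod.mk x ⁻¹' S) = 0 := by
      rw [Measure.volume_eq_prod] at hS0
      have := Measure.measure_ae_null_of_prod_null hS0
      filter_upwards [this] with x hx using hx
    have hae : ∀ᵐ x ∂(volume : Measure R2), volume (Prod.mk x ⁻¹' (H ⁻¹' S)) = 0 := by
      filter_upwards [hs0] with x hx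
      have hset : Prod.mk x ⁻¹' (H ⁻¹' S)
          = {z : R2 | (‖x - z‖^2 + φ (x - z)) + (‖z‖^2 + φ z) ∈ (Prod.mk x ⁻¹' S)} := by
        ext z
        simp only [Set.mem_preimage, Set.mem_setOf_eq, hH, hψ]
      rw [hset]
      exact twoD_aux φ hφconv hφC2 x (measurable_prodMk_left hSm) hx
    calc ∫⁻ x, volume (Prod.mk x ⁻¹' (H ⁻¹' S)) = ∫⁻ _, 0 ∂(volume : Measure R2) :=
          lintegral_congr_ae hae
      _ = 0 := lintegral_zero
  · -- support identification
    rw [hμ]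
    -- midpoint convexity
    have hsub : ∀ y z : R2, 2 * ψ ((2:ℝ)⁻¹ • (y + z)) ≤ ψ y + ψ z := by
      intro y z
      have hφm : φ ((1/2:ℝ) • y + (1/2:ℝ) • z) ≤ (1/2) * φ y + (1/2) * φ z := by
        simpa [smul_eq_mul] using
          hφconv.2 (Set.mem_univ y) (Set.mem_univ z)
            (by norm_num : (0:ℝ) ≤ 1/2) (by norm_num : (0:ℝ) ≤ 1/2) (by norm_num)
      have hsm : (2:ℝ)⁻¹ • (y + z) = (1/2:ℝ) • y + (1/2:ℝ) • z := by
        rw [smul_add]; norm_num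
      have hnorm : ‖(2:ℝ)⁻¹ • (y + z)‖^2 = (1/4) * ‖y + z‖^2 := by
        rw [norm_smul]
        simp [abs_of_nonneg]
        ring
      have hpar : ‖y + z‖^2 ≤ 2*‖y‖^2 + 2*‖z‖^2 := by
        nlinarith [norm_add_sq_real y z, real_inner_le_norm y z,
          sq_nonneg (‖y‖ - ‖z‖), norm_nonneg y, norm_nonneg z]
      rw [hψ]
      simp only
      rw [hsm] at hnorm ⊢
      rw [hnorm]
      linarith
    have hrange : Set.range F = {q : R3 | 2 * ψ ((2:ℝ)⁻¹ • q.1) ≤ q.2} := by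
      apply Set.Subset.antisymm
      · rintro q ⟨⟨y, z⟩, rfl⟩
        simpa [hF] using hsub y z
      · rintro ⟨ξ, τ⟩ hq
        simp only [Set.mem_setOf_eq] at hq
        set m : R2 := (2:ℝ)⁻¹ • ξ with hm
        set u : R2 := EuclideanSpace.single (0 : Fin 2) (1:ℝ) with hu
        have hun : ‖u‖ = 1 := by
          rw [hu, EuclideanSpace.norm_single, norm_one]
        set f : ℝ → ℝ := fun t => ψ (m + t • u) + ψ (m - t • u) with hf
        have hfc : Continuous f := by
          apply Continuous.add
          · exact hψc.comp (continuous_const.add (continuous_id.smul continuous_const))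
          · exact hψc.comp (continuous_const.sub (continuous_id.smul continuous_const))
        have hτ0 : 0 ≤ τ := le_trans (by have := hψ0 m; linarith) hq
        set t₀ : ℝ := Real.sqrt (τ/2) with ht₀
        have ht₀0 : 0 ≤ t₀ := Real.sqrt_nonneg _
        have hft₀ : τ ≤ f t₀ := by
          have h1 : ‖m + t₀ • u‖^2 ≤ ψ (m + t₀ • u) := hψlb _
          have h2 : ‖m - t₀ • u‖^2 ≤ ψ (m - t₀ • u) := hψlb _
          have hpar : ‖m + t₀ • u‖^2 + ‖m - t₀ • u‖^2 = 2*‖m‖^2 + 2*‖t₀ • u‖^2 := by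
            simpa [pow_two, mul_add] using parallelogram_law_with_norm ℝ m (t₀ • u)
          have hnu : ‖t₀ • u‖^2 = t₀^2 := by
            rw [norm_smul, hun, mul_one, Real.norm_eq_abs, sq_abs]
          have hsq : t₀^2 = τ/2 := Real.sq_sqrt (by linarith)
          have : 2*t₀^2 = τ := by rw [hsq]; ring
          rw [hf]
          simp only
          nlinarith [sq_nonneg ‖m‖, h1, h2, hpar, hnu]
        have hf0 : f 0 ≤ τ := by
          rw [hf]
          simp only [zero_smul, add_zero, sub_zero]
          calc ψ m + ψ m = 2 * ψ m := by ring
            _ ≤ τ := hq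
        obtain ⟨t, _, hft⟩ := intermediate_value_Icc ht₀0 hfc.continuousOn ⟨hf0, hft₀⟩
        refine ⟨(m + t • u, m - t • u), ?_⟩
        rw [hF]
        have hsum : (m + t • u) + (m - t • u) = ξ := by
          have h2m : m + m = ξ := by
            rw [hm, ← two_smul ℝ ((2:ℝ)⁻¹ • ξ), smul_smul]
            norm_num
          rw [← h2m]; abel
        simp only
        rw [hsum]
        rw [hf] at hft
        exact Prod.ext rfl hft
    have hSclosed : IsClosed {q : R3 | 2 * ψ ((2:ℝ)⁻¹ • q.1) ≤ q.2} := by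
      apply isClosed_le
      · exact (continuous_const.mul (hψc.comp ((continuous_const_smul (2:ℝ)⁻¹).comp continuous_fst)))
      · exact continuous_snd
    ext q
    simp only [msupport, Set.mem_setOf_eq]
    constructor
    · intro hq
      by_contra hqS
      refine hq _ hSclosed.isOpen_compl hqS ?_
      rw [Measure.map_apply hFm hSclosed.measurableSet.compl]
      have : F ⁻¹' {q' : R3 | 2 * ψ ((2:ℝ)⁻¹ • q'.1) ≤ q'.2}ᶜ = ∅ := by
        rw [Set.eq_empty_iff_forall_notMem]
        intro p hp
        exact hp (hrange ▸ Set.mem_range_self p)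
      rw [this]
      simp
    · intro hq U hU hqU
      obtain ⟨p, hp⟩ : q ∈ Set.range F := hrange ▸ hq
      rw [Measure.map_apply hFm hU.measurableSet]
      have hne : (F ⁻¹' U).Nonempty := ⟨p, by rw [Set.mem_preimage, hp]; exact hqU⟩
      exact ((hU.preimage hFc).measure_pos volume hne).ne'
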